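/- arXiv:2001.01507 — 4 statements merged into one kernel-verified Lean document; each statement's English description precedes it below -/
import Mathlib

section
/- Let Λ : D(A) → D(B₁ ⊗ B₂) be a quantum channel (completely positive trace-preserving map) whose reduced channels Tr_{B₂}∘Λ and Tr_{B₁}∘Λ are both the identity channel on A (with B₁ ≅ B₂ ≅ A). Then dim A = 1. Equivalently, for dim A ≥ 2 no perfect cloning channel exists. -/
open Classical Matrix
open scoped ComplexOrder

open scoped MatrixOrder in
/-- If a positive semidefinite matrix has a zero diagonal entry, the whole
row and column through it vanish. -/
lemma psd_entry_zero {n : Type} [Fintype n] [DecidableEq n] {M : Matrix n n ℂ}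
    (hM : M.PosSemidef) {p : n} (hp : M p p = 0) (q : n) : M p q = 0 ∧ M q p = 0 := by
  obtain ⟨B, rfl⟩ := CStarAlgebra.nonneg_iff_eq_star_mul_self.mp hM.nonneg
  simp only [Matrix.star_eq_conjTranspose] at hp ⊢
  have hB : ∀ k, B k p = 0 := by
    have h0 : ∑ k, star (B k p) * B k p = 0 := by
      simpa [Matrix.mul_apply, Matrix.conjTranspose_apply] using hp
    have h1 := (Finset.sum_eq_zero_iff_of_nonneg
      (fun k _ => star_mul_self_nonneg (B k p))).mp h0
    intro k
    have h2 := h1 k (Finset.mem_univ k)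
    rcases mul_eq_zero.mp h2 with h | h
    · exact star_eq_zero.mp h
    · exact h
  constructor <;> simp [Matrix.mul_apply, Matrix.conjTranspose_apply, hB]

lemma psd_diag_nonneg {n : Type} [Fintype n] [DecidableEq n] {M : Matrix n n ℂ}
    (hM : M.PosSemidef) (p : n) : 0 ≤ M p p := by
  have := hM.dotProduct_mulVec_nonneg (Pi.single p 1)
  simpa [Matrix.mulVec, dotProduct, Pi.single_apply] using this

/-- Rank-one outer products are positive semidefinite. -/
lemma outer_psd {A : Type} [Fintype A] [DecidableEq A] (v : A → ℂ) :
    (Matrix.of fun i j => v i * star (v j)).PosSemidef := by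
  refine Matrix.PosSemidef.of_dotProduct_mulVec_nonneg ?_ ?_
  · ext i j
    simp [Matrix.conjTranspose_apply, mul_comm]
  · intro x
    have h : dotProduct (star x) ((Matrix.of fun i j => v i * star (v j)) *ᵥ x)
        = star (∑ j, star (v j) * x j) * (∑ j, star (v j) * x j) := by
      simp only [dotProduct, Matrix.mulVec, Matrix.of_apply, Pi.star_apply,
        star_sum]
      rw [Finset.sum_mul]
      refine Finset.sum_congr rfl fun i _ => ?_
      rw [Finset.mul_sum, Finset.mul_sum]
      refine Finset.sum_congr rfl fun j _ => ?_
      simp only [StarMul.star_mul, star_star]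
      ring
    rw [h]
    exact star_mul_self_nonneg _

/-- Complete positivity: `id_n ⊗ Λ` maps positive semidefinite matrices to
positive semidefinite matrices for every `n`. -/
def IsCompletelyPositive {A B : Type} [Fintype A] [DecidableEq A] [Fintype B] [DecidableEq B]
    (Λ : Matrix A A ℂ →ₗ[ℂ] Matrix B B ℂ) : Prop :=
  ∀ (n : ℕ) (M : Matrix (Fin n × A) (Fin n × A) ℂ), M.PosSemidef →
    (Matrix.of (fun (p q : Fin n × B) =>
      Λ (Matrix.of (fun a a' => M (p.1, a) (q.1, a'))) p.2 q.2)).PosSemidef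

/-- Partial trace over the second factor. -/
noncomputable def ptB {A B : Type} [Fintype A] [Fintype B]
    (ρ : Matrix (A × B) (A × B) ℂ) : Matrix A A ℂ :=
  fun a a' => ∑ b, ρ (a, b) (a', b)

/-- Partial trace over the first factor. -/
noncomputable def ptA {A B : Type} [Fintype A] [Fintype B]
    (ρ : Matrix (A × B) (A × B) ℂ) : Matrix B B ℂ :=
  fun b b' => ∑ a, ρ (a, b) (a, b')

/-- A completely positive map preserves positive semidefiniteness (case `n = 1`). -/
lemma cp_posSemidef {A B : Type} [Fintype A] [DecidableEq A] [Fintype B] [DecidableEq B]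
    {Λ : Matrix A A ℂ →ₗ[ℂ] Matrix B B ℂ} (hCP : IsCompletelyPositive Λ)
    {σ : Matrix A A ℂ} (hσ : σ.PosSemidef) : (Λ σ).PosSemidef := by
  have h1 : (σ.submatrix (Prod.snd : Fin 1 × A → A) Prod.snd).PosSemidef :=
    hσ.submatrix _
  have h2 := hCP 1 _ h1
  have h3 := h2.submatrix (fun p : B => ((0 : Fin 1), p))
  exact h3

lemma sum_pair' {A : Type} [Fintype A] [DecidableEq A] {a b : A} (hab : a ≠ b)
    {f : A → ℂ} (h : ∀ k, k ≠ a → k ≠ b → f k = 0) : ∑ k, f k = f a + f b := by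
  rw [← Finset.sum_subset (Finset.subset_univ ({a, b} : Finset A))
    (fun x _ hx => h x (fun h1 => hx (by simp [h1])) (fun h1 => hx (by simp [h1])))]
  exact Finset.sum_pair hab

lemma sum_four {A : Type} [Fintype A] [DecidableEq A] {a b : A} (hab : a ≠ b)
    {f : A × A → ℂ}
    (h : ∀ p, p ≠ (a,a) → p ≠ (a,b) → p ≠ (b,a) → p ≠ (b,b) → f p = 0) :
    ∑ p, f p = f (a,a) + f (a,b) + f (b,a) + f (b,b) := by
  have hs : ∑ p ∈ ({(a,a),(a,b),(b,a),(b,b)} : Finset (A × A)), f p = ∑ p, f p :=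
    Finset.sum_subset (Finset.subset_univ _)
      (fun p _ hp => h p (fun h1 => hp (by simp [h1])) (fun h1 => hp (by simp [h1]))
        (fun h1 => hp (by simp [h1])) (fun h1 => hp (by simp [h1])))
  rw [← hs]
  rw [Finset.sum_insert (by simp [hab, Prod.ext_iff]),
      Finset.sum_insert (by simp [hab, hab.symm, Prod.ext_iff]),
      Finset.sum_insert (by simp [hab, hab.symm, Prod.ext_iff]),
      Finset.sum_singleton]
  ring

/-- Diagonal entries of `X` vanish wherever the diagonal of a common marginal vanishes. -/
lemma diag_vanish {A : Type} [Fintype A] [DecidableEq A]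
    {σ : Matrix A A ℂ} {X : Matrix (A × A) (A × A) ℂ} (hX : X.PosSemidef)
    (hB : ∀ i j, ∑ k, X (i,k) (j,k) = σ i j)
    (hA : ∀ i j, ∑ k, X (k,i) (k,j) = σ i j)
    {c : A} (hc : σ c c = 0) :
    ∀ k, X (c,k) (c,k) = 0 ∧ X (k,c) (k,c) = 0 := by
  intro k
  constructor
  · have h0 : ∑ m, X (c,m) (c,m) = 0 := by rw [hB c c, hc]
    exact (Finset.sum_eq_zero_iff_of_nonneg
      (fun m _ => psd_diag_nonneg hX (c,m))).mp h0 k (Finset.mem_univ k)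
  · have h0 : ∑ m, X (m,c) (m,c) = 0 := by rw [hA c c, hc]
    exact (Finset.sum_eq_zero_iff_of_nonneg
      (fun m _ => psd_diag_nonneg hX (m,c))).mp h0 k (Finset.mem_univ k)

lemma offblock {A : Type} [Fintype A] [DecidableEq A] {a b : A}
    {σ : Matrix A A ℂ} {X : Matrix (A × A) (A × A) ℂ} (hX : X.PosSemidef)
    (hB : ∀ i j, ∑ k, X (i,k) (j,k) = σ i j)
    (hA : ∀ i j, ∑ k, X (k,i) (k,j) = σ i j)
    (h : σ a a = 0 ∨ σ b b = 0) :
    X (a,a) (b,b) = 0 ∧ X (a,b) (b,a) = 0 := by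
  rcases h with h | h
  · exact ⟨(psd_entry_zero hX ((diag_vanish hX hB hA h a).1) (b,b)).1,
      (psd_entry_zero hX ((diag_vanish hX hB hA h b).1) (b,a)).1⟩
  · exact ⟨(psd_entry_zero hX ((diag_vanish hX hB hA h b).1) (a,a)).2,
      (psd_entry_zero hX ((diag_vanish hX hB hA h a).2) (b,a)).1⟩

/-- Core estimate: a positive semidefinite matrix on `(A × A)²` whose two marginals
both equal a rank-one state supported on `{a, b}` with off-diagonal phase `ε = ±1`
must have `X (a,a) (b,b) + X (a,b) (b,a) + h.c. ≥ 2`. -/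
lemma key {A : Type} [Fintype A] [DecidableEq A] {a b : A} (hab : a ≠ b) {ε : ℂ}
    (hε1 : star ε = ε) (hε2 : ε * ε = 1)
    {σ : Matrix A A ℂ} {X : Matrix (A × A) (A × A) ℂ} (hX : X.PosSemidef)
    (hB : ∀ i j, ∑ k, X (i,k) (j,k) = σ i j)
    (hA : ∀ i j, ∑ k, X (k,i) (k,j) = σ i j)
    (hσaa : σ a a = 1) (hσbb : σ b b = 1) (hσab : σ a b = ε)
    (hσ0 : ∀ i, i ≠ a → i ≠ b → σ i i = 0) :
    (2 : ℂ) ≤ X (a,a) (b,b) + X (a,b) (b,a) + star (X (a,a) (b,b) + X (a,b) (b,a)) := by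
  have hd : ∀ p : A × A, (p.1 ≠ a ∧ p.1 ≠ b) ∨ (p.2 ≠ a ∧ p.2 ≠ b) → X p p = 0 := by
    rintro ⟨i, k⟩ (⟨h1, h2⟩ | ⟨h1, h2⟩)
    · exact (diag_vanish hX hB hA (hσ0 i h1 h2) k).1
    · exact (diag_vanish hX hB hA (hσ0 k h1 h2) i).2
  have hz : ∀ p q : A × A, (p.1 ≠ a ∧ p.1 ≠ b) ∨ (p.2 ≠ a ∧ p.2 ≠ b) → X p q = 0 ∧ X q p = 0 :=
    fun p q h => psd_entry_zero hX (hd p h) q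
  have hS1 : X (a,a) (b,a) + X (a,b) (b,b) = ε := by
    rw [← hσab, ← hB a b]
    exact (sum_pair' hab (fun k h1 h2 => (hz (a,k) (b,k) (Or.inr ⟨h1, h2⟩)).1)).symm
  have hS2 : X (a,a) (a,b) + X (b,a) (b,b) = ε := by
    rw [← hσab, ← hA a b]
    exact (sum_pair' hab (fun k h1 h2 => (hz (k,a) (k,b) (Or.inl ⟨h1, h2⟩)).1)).symm
  have hS1' : X (b,a) (a,a) + X (b,b) (a,b) = ε := by
    have := congrArg star hS1
    rw [star_add, hX.1.apply, hX.1.apply, hε1] at this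
    linear_combination this
  have hS2' : X (a,b) (a,a) + X (b,b) (b,a) = ε := by
    have := congrArg star hS2
    rw [star_add, hX.1.apply, hX.1.apply, hε1] at this
    linear_combination this
  have h5a : X (a,a) (a,a) + X (a,b) (a,b) = 1 := by
    rw [← hσaa, ← hB a a]
    exact (sum_pair' hab (fun k h1 h2 => (hd (a,k) (Or.inr ⟨h1, h2⟩)))).symm
  have h5b : X (b,a) (b,a) + X (b,b) (b,b) = 1 := by
    rw [← hσbb, ← hB b b]
    exact (sum_pair' hab (fun k h1 h2 => (hd (b,k) (Or.inr ⟨h1, h2⟩)))).symm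
  set x : A × A → ℂ := fun p =>
    if p = (a,a) then 1 else if p = (a,b) then -ε else if p = (b,a) then -ε
    else if p = (b,b) then 1 else 0 with hxdef
  have hx0 : ∀ p, p ≠ (a,a) → p ≠ (a,b) → p ≠ (b,a) → p ≠ (b,b) → x p = 0 := by
    intro p h1 h2 h3 h4; simp [hxdef, h1, h2, h3, h4]
  have hx1 : x (a,a) = 1 := by simp [hxdef]
  have hx2 : x (a,b) = -ε := by simp [hxdef, Prod.ext_iff, hab, hab.symm]
  have hx3 : x (b,a) = -ε := by simp [hxdef, Prod.ext_iff, hab, hab.symm]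
  have hx4 : x (b,b) = 1 := by simp [hxdef, Prod.ext_iff, hab, hab.symm]
  have hQ := hX.dotProduct_mulVec_nonneg x
  have hQE : dotProduct (star x) (X *ᵥ x)
      = ∑ p, star (x p) * ∑ q, X p q * x q := by
    simp [dotProduct, Matrix.mulVec, Pi.star_apply]
  rw [hQE] at hQ
  have hinner : ∀ p : A × A, (∑ q, X p q * x q)
      = X p (a,a) * x (a,a) + X p (a,b) * x (a,b) + X p (b,a) * x (b,a)
        + X p (b,b) * x (b,b) :=
    fun p => sum_four hab (fun q h1 h2 h3 h4 => by rw [hx0 q h1 h2 h3 h4, mul_zero])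
  have houter : (∑ p, star (x p) * ∑ q, X p q * x q)
      = star (x (a,a)) * (∑ q, X (a,a) q * x q)
      + star (x (a,b)) * (∑ q, X (a,b) q * x q)
      + star (x (b,a)) * (∑ q, X (b,a) q * x q)
      + star (x (b,b)) * (∑ q, X (b,b) q * x q) :=
    sum_four hab (fun p h1 h2 h3 h4 => by rw [hx0 p h1 h2 h3 h4, star_zero, zero_mul])
  rw [houter, hinner, hinner, hinner, hinner, hx1, hx2, hx3, hx4] at hQ
  rw [star_one, star_neg, hε1] at hQ
  have hfin : (0:ℂ) ≤ X (a,a) (b,b) + X (a,b) (b,a)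
      + star (X (a,a) (b,b) + X (a,b) (b,a)) - 2 := by
    have hstar : star (X (a,a) (b,b) + X (a,b) (b,a)) = X (b,b) (a,a) + X (b,a) (a,b) := by
      rw [star_add, hX.1.apply, hX.1.apply]
    rw [hstar]
    calc (0:ℂ) ≤ _ := hQ
    _ = X (a,a) (b,b) + X (a,b) (b,a) + (X (b,b) (a,a) + X (b,a) (a,b)) - 2 := by
        linear_combination h5a + h5b - ε * hS1 - ε * hS2 - ε * hS1' - ε * hS2'
          + (X (a,b) (a,b) + X (b,a) (b,a) + X (a,b) (b,a) + X (b,a) (a,b) - 4) * hε2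
  exact sub_nonneg.mp hfin

/-- No-cloning theorem in channel form: if a quantum channel
`Λ : D(A) → D(B₁ ⊗ B₂)` (with `B₁ ≅ B₂ ≅ A`) has both reduced channels equal to the
identity channel on `A`, then `dim A = 1`. -/
theorem no_cloning {A : Type} [Fintype A] [DecidableEq A] [Nonempty A]
    (Λ : Matrix A A ℂ →ₗ[ℂ] Matrix (A × A) (A × A) ℂ)
    (hCP : IsCompletelyPositive Λ)
    (hTP : ∀ ρ : Matrix A A ℂ, (Λ ρ).trace = ρ.trace)
    (hred₁ : ∀ ρ : Matrix A A ℂ, ptB (Λ ρ) = ρ)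
    (hred₂ : ∀ ρ : Matrix A A ℂ, ptA (Λ ρ) = ρ) :
    Fintype.card A = 1 := by
  by_contra hcard
  have hlt : 1 < Fintype.card A :=
    lt_of_le_of_ne Fintype.card_pos (Ne.symm hcard)
  obtain ⟨a, b, hab⟩ := Fintype.exists_pair_of_one_lt_card hlt
  -- the four rank-one states
  let vp : A → ℂ := fun i => if i = a then 1 else if i = b then 1 else 0
  let vm : A → ℂ := fun i => if i = a then 1 else if i = b then -1 else 0
  let va : A → ℂ := fun i => if i = a then 1 else 0
  let vb : A → ℂ := fun i => if i = b then 1 else 0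
  let outer : (A → ℂ) → Matrix A A ℂ := fun v => Matrix.of fun i j => v i * star (v j)
  -- marginal facts for any state
  have hBgen : ∀ σ : Matrix A A ℂ, ∀ i j, ∑ k, (Λ σ) (i,k) (j,k) = σ i j := by
    intro σ i j
    have := congrFun (congrFun (hred₁ σ) i) j
    simpa [ptB] using this
  have hAgen : ∀ σ : Matrix A A ℂ, ∀ i j, ∑ k, (Λ σ) (k,i) (k,j) = σ i j := by
    intro σ i j
    have := congrFun (congrFun (hred₂ σ) i) j
    simpa [ptA] using this
  -- apply the key estimate to the two states with ε = ±1
  have hkeyp : (2 : ℂ) ≤ (Λ (outer vp)) (a,a) (b,b) + (Λ (outer vp)) (a,b) (b,a)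
      + star ((Λ (outer vp)) (a,a) (b,b) + (Λ (outer vp)) (a,b) (b,a)) := by
    refine key (ε := 1) hab (by simp) (by norm_num) (cp_posSemidef hCP (outer_psd vp))
      (hBgen _) (hAgen _) ?_ ?_ ?_ ?_
    · simp [outer, vp]
    · simp [outer, vp, hab.symm]
    · simp [outer, vp, hab.symm]
    · intro i h1 h2; simp [outer, vp, h1, h2]
  have hkeym : (2 : ℂ) ≤ (Λ (outer vm)) (a,a) (b,b) + (Λ (outer vm)) (a,b) (b,a)
      + star ((Λ (outer vm)) (a,a) (b,b) + (Λ (outer vm)) (a,b) (b,a)) := by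
    refine key (ε := -1) hab (by simp) (by norm_num) (cp_posSemidef hCP (outer_psd vm))
      (hBgen _) (hAgen _) ?_ ?_ ?_ ?_
    · simp [outer, vm]
    · simp [outer, vm, hab.symm]
    · simp [outer, vm, hab.symm]
    · intro i h1 h2; simp [outer, vm, h1, h2]
  -- vanishing of the same entries for the basis states
  have hoffa := offblock (a := a) (b := b) (cp_posSemidef hCP (outer_psd va))
    (hBgen (outer va)) (hAgen (outer va)) (Or.inr (by simp [outer, va, hab.symm]))
  have hoffb := offblock (a := a) (b := b) (cp_posSemidef hCP (outer_psd vb))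
    (hBgen (outer vb)) (hAgen (outer vb)) (Or.inl (by simp [outer, vb, hab]))
  -- linearity
  have hlin : outer vp + outer vm = (2 : ℂ) • outer va + (2 : ℂ) • outer vb := by
    funext i j
    simp only [outer, Matrix.add_apply, Matrix.smul_apply, Matrix.of_apply, smul_eq_mul]
    by_cases hi : i = a <;> by_cases hi' : i = b <;>
      by_cases hj : j = a <;> by_cases hj' : j = b <;>
      simp [vp, vm, va, vb, hi, hi', hj, hj'] <;> simp_all <;> ring
  have hΛlin : Λ (outer vp) + Λ (outer vm)
      = (2 : ℂ) • Λ (outer va) + (2 : ℂ) • Λ (outer vb) := by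
    rw [← map_add, hlin, map_add, LinearMap.map_smul, LinearMap.map_smul]
  have hz1 : (Λ (outer vp)) ((a,a)) ((b,b)) + (Λ (outer vm)) ((a,a)) ((b,b)) = 0 := by
    have h := congrFun (congrFun hΛlin ((a,a) : A × A)) ((b,b) : A × A)
    simp only [Matrix.add_apply, Matrix.smul_apply, smul_eq_mul] at h
    rw [h, hoffa.1, hoffb.1]
    ring
  have hz2 : (Λ (outer vp)) ((a,b)) ((b,a)) + (Λ (outer vm)) ((a,b)) ((b,a)) = 0 := by
    have h := congrFun (congrFun hΛlin ((a,b) : A × A)) ((b,a) : A × A)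
    simp only [Matrix.add_apply, Matrix.smul_apply, smul_eq_mul] at h
    rw [h, hoffa.2, hoffb.2]
    ring
  set Tp := (Λ (outer vp)) (a,a) (b,b) + (Λ (outer vp)) (a,b) (b,a) with hTp
  set Tm := (Λ (outer vm)) (a,a) (b,b) + (Λ (outer vm)) (a,b) (b,a) with hTm
  have hT : Tp + Tm = 0 := by rw [hTp, hTm]; linear_combination hz1 + hz2
  have hTs : star Tp + star Tm = 0 := by rw [← star_add, hT, star_zero]
  have hsum : (4 : ℂ) ≤ 0 := by
    calc (4 : ℂ) = 2 + 2 := by norm_num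
    _ ≤ (Tp + star Tp) + (Tm + star Tm) := add_le_add hkeyp hkeym
    _ = (Tp + Tm) + (star Tp + star Tm) := by ring
    _ = 0 := by rw [hT, hTs, add_zero]
  have := (Complex.le_def.mp hsum).1
  norm_num at this
end

section
/- Conversely, if the Choi state of a channel Λ : D(A) → D(B) is separable, ρ^Λ_{A'B} = Σ_α p_α ρ_α^{A'} ⊗ σ_α^B, then Λ is a measure-and-prepare channel: Λ(τ) = Σ_α Tr(M_α τ) σ_α with M_α = d_A p_α (ρ_α^{A'})^T, and {M_α} is a POVM. -/
open Classical Matrix Kronecker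
open scoped ComplexOrder

/-- The projector `|Γ⟩⟨Γ|` onto the maximally entangled state on `A' ⊗ A`. -/
noncomputable def maxEntProj (A : Type) [Fintype A] [DecidableEq A] :
    Matrix (A × A) (A × A) ℂ :=
  fun p q => if p.1 = p.2 ∧ q.1 = q.2 then ((Fintype.card A : ℂ))⁻¹ else 0

/-- The Choi state `ρ^Λ_{A'B} = (id_{A'} ⊗ Λ)(|Γ⟩⟨Γ|)`. -/
noncomputable def choiState {A B : Type} [Fintype A] [DecidableEq A] [Fintype B] [DecidableEq B]
    (Λ : Matrix A A ℂ → Matrix B B ℂ) : Matrix (A × B) (A × B) ℂ :=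
  fun p q =>
    Λ (Matrix.of (fun a a' => maxEntProj A (p.1, a) (q.1, a'))) p.2 q.2

/-- A nonnegative real multiple of a PSD matrix is PSD. -/
lemma psd_real_smul {n : Type} [Fintype n] {N : Matrix n n ℂ} (hN : N.PosSemidef)
    {r : ℝ} (hr : 0 ≤ r) : ((r : ℂ) • N).PosSemidef := by
  constructor
  · have := hN.1
    unfold Matrix.IsHermitian at this ⊢
    rw [conjTranspose_smul, this]
    norm_num
  · intro x
    have h2 := hN.2 x
    have e : (x.sum fun i xi => x.sum fun j xj => star xi * ((r : ℂ) • N) i j * xj)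
        = (r : ℂ) * (x.sum fun i xi => x.sum fun j xj => star xi * N i j * xj) := by
      simp only [Finsupp.sum, Finset.mul_sum, Matrix.smul_apply, smul_eq_mul]
      exact Finset.sum_congr rfl fun i _ => Finset.sum_congr rfl fun j _ => by ring
    rw [e]
    have hr' : (0 : ℂ) ≤ (r : ℂ) := by
      rw [Complex.le_def]
      simp [hr]
    exact mul_nonneg hr' h2

/-- If the Choi state of a channel `Λ` is separable,
`ρ^Λ = ∑ α, p_α • (ρ_α^{A'} ⊗ σ_α^B)`, then `Λ` is the measure-and-prepare channel
`Λ(τ) = ∑ α, Tr(M_α τ) σ_α` with `M_α = d_A p_α (ρ_α^{A'})ᵀ`, and `{M_α}` is a POVM. -/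
theorem measure_and_prepare_of_separable_choi {A B γ : Type}
    [Fintype A] [DecidableEq A] [Fintype B] [DecidableEq B] [Fintype γ]
    (Λ : Matrix A A ℂ →ₗ[ℂ] Matrix B B ℂ)
    (hCP : IsCompletelyPositive Λ)
    (hTP : ∀ ρ : Matrix A A ℂ, (Λ ρ).trace = ρ.trace)
    (p : γ → ℝ) (hp0 : ∀ α, 0 ≤ p α) (hp1 : ∑ α, p α = 1)
    (ρA : γ → Matrix A A ℂ) (hρA : ∀ α, (ρA α).PosSemidef ∧ (ρA α).trace = 1)
    (σ : γ → Matrix B B ℂ) (hσ : ∀ α, (σ α).PosSemidef ∧ (σ α).trace = 1)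
    (hchoi : choiState (fun ρ => Λ ρ) = ∑ α, (p α : ℂ) • (ρA α ⊗ₖ σ α))
    (M : γ → Matrix A A ℂ)
    (hMdef : ∀ α, M α = ((Fintype.card A : ℂ) * (p α : ℂ)) • (ρA α).transpose) :
    (∀ α, (M α).PosSemidef) ∧ (∑ α, M α = 1) ∧
      (∀ τ : Matrix A A ℂ, Λ τ = ∑ α, ((M α * τ).trace) • σ α) := by
  classical
  set d : ℂ := (Fintype.card A : ℂ) with hd
  -- key entrywise identity from the Choi equation
  have key : ∀ (a a' : A) (b b' : B),
      d⁻¹ * Λ (Matrix.single a a' 1) b b'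
        = ∑ α, (p α : ℂ) * (ρA α a a' * σ α b b') := by
    intro a a' b b'
    have h := congrFun (congrFun hchoi (a, b)) (a', b')
    have hE : (Matrix.of (fun x x' => maxEntProj A (a, x) (a', x')) : Matrix A A ℂ)
        = d⁻¹ • Matrix.single a a' 1 := by
      ext x x'
      simp only [Matrix.of_apply, maxEntProj, Matrix.single, Matrix.smul_apply,
        smul_eq_mul, Matrix.of_apply]
      split_ifs with h1 h2 h2 <;> simp_all
    have hL : choiState (fun ρ => Λ ρ) (a, b) (a', b')
        = d⁻¹ * Λ (Matrix.single a a' 1) b b' := by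
      show Λ (Matrix.of (fun x x' => maxEntProj A (a, x) (a', x'))) b b' = _
      rw [hE, _root_.map_smul]
      simp [Matrix.smul_apply, smul_eq_mul]
    rw [hL] at h
    rw [h]
    simp [Matrix.sum_apply, Matrix.smul_apply, Matrix.kroneckerMap_apply, smul_eq_mul]
  -- trace of stdBasisMatrix
  have htrE : ∀ a a' : A, (Matrix.single a a' (1 : ℂ)).trace
      = if a = a' then 1 else 0 := by
    intro a a'
    simp only [Matrix.trace, Matrix.diag, Matrix.single, Matrix.of_apply]
    split_ifs with h
    · subst h; simp
    · apply Finset.sum_eq_zero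
      intro x _
      simp only [ite_eq_right_iff, and_imp]
      intro h1 h2
      exact absurd (h1.trans h2.symm) h
  -- the reduced-state identity from trace preservation
  have hsum : ∀ a a' : A, ∑ α, (p α : ℂ) * ρA α a a'
      = if a = a' then d⁻¹ else 0 := by
    intro a a'
    have h1 : ∑ b, (d⁻¹ * Λ (Matrix.single a a' 1) b b)
        = ∑ b, ∑ α, (p α : ℂ) * (ρA α a a' * σ α b b) :=
      Finset.sum_congr rfl (fun b _ => key a a' b b)
    have hLside : ∑ b, (d⁻¹ * Λ (Matrix.single a a' 1) b b)
        = if a = a' then d⁻¹ else 0 := by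
      rw [← Finset.mul_sum]
      have : ∑ b, Λ (Matrix.single a a' 1) b b = (Λ (Matrix.single a a' 1)).trace := rfl
      rw [this, hTP, htrE]
      split_ifs <;> simp
    have hRside : ∑ b, ∑ α, (p α : ℂ) * (ρA α a a' * σ α b b)
        = ∑ α, (p α : ℂ) * ρA α a a' := by
      rw [Finset.sum_comm]
      apply Finset.sum_congr rfl
      intro α _
      have : ∑ b, (p α : ℂ) * (ρA α a a' * σ α b b)
          = (p α : ℂ) * ρA α a a' * ∑ b, σ α b b := by
        rw [Finset.mul_sum]; ring_nf
      rw [this]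
      have : (∑ b, σ α b b) = (σ α).trace := rfl
      rw [this, (hσ α).2, mul_one]
    rw [hLside, hRside] at h1
    exact h1.symm
  refine ⟨?_, ?_, ?_⟩
  · -- each M α is PSD
    intro α
    rw [hMdef α]
    have : (d * (p α : ℂ)) = (((Fintype.card A : ℝ) * p α : ℝ) : ℂ) := by
      push_cast [hd]; ring
    rw [this]
    exact psd_real_smul (hρA α).1.transpose
      (mul_nonneg (by positivity) (hp0 α))
  · -- the M α sum to 1
    ext a a'
    have hne : Nonempty A := ⟨a⟩
    have hdne : d ≠ 0 := by
      simp [hd, Fintype.card_ne_zero]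
    rw [Matrix.sum_apply]
    have : ∀ α ∈ Finset.univ, M α a a' = d * ((p α : ℂ) * ρA α a' a) := by
      intro α _
      rw [hMdef α]
      simp [Matrix.smul_apply, Matrix.transpose_apply, smul_eq_mul]
      ring
    rw [Finset.sum_congr rfl this, ← Finset.mul_sum, hsum a' a]
    by_cases h : a' = a
    · subst h
      simp [Matrix.one_apply, mul_inv_cancel₀ hdne]
    · have h' : ¬ a = a' := fun hc => h hc.symm
      simp [Matrix.one_apply, h, h']
  · -- the measure-and-prepare formula
    intro τ
    rcases isEmpty_or_nonempty A with hA | hA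
    · have hτ : τ = 0 := Subsingleton.elim _ _
      have : ∀ α, (M α * τ).trace = 0 := by
        intro α
        simp [hτ]
      simp [hτ, this]
    · have hdne : d ≠ 0 := by
        simp [hd, Fintype.card_ne_zero]
      have keyE : ∀ (a a' : A) (b b' : B),
          Λ (Matrix.single a a' 1) b b'
            = d * ∑ α, (p α : ℂ) * (ρA α a a' * σ α b b') := by
        intro a a' b b'
        rw [← key a a' b b']
        field_simp
      have hτexp : Λ τ = ∑ a : A, ∑ a' : A, τ a a' • Λ (Matrix.single a a' 1) := by
        conv_lhs => rw [matrix_eq_sum_single τ]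
        rw [map_sum]
        apply Finset.sum_congr rfl
        intro a _
        rw [map_sum]
        apply Finset.sum_congr rfl
        intro a' _
        have : Matrix.single a a' (τ a a') = τ a a' • Matrix.single a a' (1 : ℂ) := by
          rw [smul_single, smul_eq_mul, mul_one]
        rw [this, _root_.map_smul]
      have htrM : ∀ α, (M α * τ).trace
          = ∑ a : A, ∑ c : A, d * (p α : ℂ) * ρA α a c * τ a c := by
        intro α
        rw [Matrix.trace, hMdef α]
        simp only [Matrix.diag_apply, Matrix.mul_apply, Matrix.smul_apply,
          Matrix.transpose_apply, smul_eq_mul]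
        rw [Finset.sum_comm]
      ext b b'
      rw [hτexp]
      simp only [Matrix.sum_apply, Matrix.smul_apply, smul_eq_mul]
      have step : ∀ a ∈ (Finset.univ : Finset A), ∀ a' ∈ (Finset.univ : Finset A),
          τ a a' * Λ (Matrix.single a a' 1) b b'
            = ∑ α, d * (p α : ℂ) * ρA α a a' * τ a a' * σ α b b' := by
        intro a _ a' _
        rw [keyE a a' b b', Finset.mul_sum, Finset.mul_sum]
        apply Finset.sum_congr rfl
        intro α _
        ring
      calc ∑ a : A, ∑ a' : A, τ a a' * Λ (Matrix.single a a' 1) b b'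
          = ∑ a : A, ∑ a' : A, ∑ α, d * (p α : ℂ) * ρA α a a' * τ a a' * σ α b b' := by
            apply Finset.sum_congr rfl
            intro a ha
            exact Finset.sum_congr rfl (step a ha)
        _ = ∑ a : A, ∑ α, ∑ a' : A, d * (p α : ℂ) * ρA α a a' * τ a a' * σ α b b' := by
            exact Finset.sum_congr rfl (fun a _ => Finset.sum_comm)
        _ = ∑ α, ∑ a : A, ∑ a' : A, d * (p α : ℂ) * ρA α a a' * τ a a' * σ α b b' :=
            Finset.sum_comm
        _ = ∑ α, (M α * τ).trace * σ α b b' := by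
            apply Finset.sum_congr rfl
            intro α _
            rw [htrM α, Finset.sum_mul]
            apply Finset.sum_congr rfl
            intro a _
            rw [Finset.sum_mul]
end

section
/- Let Λ₁ be the qubit channel Λ₁(ρ) = ⟨0|ρ|0⟩ |0⟩⟨0| + ⟨1|ρ|1⟩ |+⟩⟨+|. Then any measure-and-prepare decomposition Λ₁(ρ) = Σ_α Tr(M_α ρ) σ_α with POVM {M_α} and states σ_α must (after collecting proportional elements) use the projective measurement {|0⟩⟨0|, |1⟩⟨1|}: every M_α is proportional to |0⟩⟨0| or to |1⟩⟨1|, with σ_α = |0⟩⟨0| or |+⟩⟨+| respectively. -/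
open Classical Matrix
open scoped ComplexOrder

noncomputable section

/-- `|0⟩`. -/
def e0 : Fin 2 → ℂ := fun i => if i = 0 then 1 else 0
/-- `|1⟩`. -/
def e1 : Fin 2 → ℂ := fun i => if i = 1 then 1 else 0
/-- `|+⟩ = (|0⟩ + |1⟩)/√2`. -/
def plusv : Fin 2 → ℂ := fun _ => ((Real.sqrt 2 : ℂ))⁻¹

/-- Rank-one projector `|u⟩⟨u|`. -/
def proj (u : Fin 2 → ℂ) : Matrix (Fin 2) (Fin 2) ℂ := Matrix.vecMulVec u (star u)

/-- The channel `Λ₁(ρ) = ⟨0|ρ|0⟩ |0⟩⟨0| + ⟨1|ρ|1⟩ |+⟩⟨+|`. -/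
def Lambda1 (ρ : Matrix (Fin 2) (Fin 2) ℂ) : Matrix (Fin 2) (Fin 2) ℂ :=
  ρ 0 0 • proj e0 + ρ 1 1 • proj plusv

end

-- auxiliary lemmas

lemma plusv_sq : plusv 0 * star (plusv 0) = (2:ℂ)⁻¹ := by
  simp only [plusv]
  rw [← Complex.ofReal_inv, Complex.star_def, Complex.conj_ofReal, ← Complex.ofReal_mul,
    ← mul_inv, Real.mul_self_sqrt (le_of_lt two_pos)]
  norm_num

lemma proj_e0_apply (i j : Fin 2) : proj e0 i j = if i = 0 ∧ j = 0 then 1 else 0 := by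
  simp [proj, vecMulVec_apply, e0]
  split_ifs <;> simp_all

lemma proj_e1_apply (i j : Fin 2) : proj e1 i j = if i = 1 ∧ j = 1 then 1 else 0 := by
  simp [proj, vecMulVec_apply, e1]
  split_ifs <;> simp_all

lemma proj_plusv_apply (i j : Fin 2) : proj plusv i j = (2:ℂ)⁻¹ := by
  have := plusv_sq
  simp only [proj, vecMulVec_apply, plusv] at this ⊢
  exact this

-- PSD basics
lemma psd_diag0 {A : Matrix (Fin 2) (Fin 2) ℂ} (hA : A.PosSemidef) : 0 ≤ A 0 0 := by
  have := hA.dotProduct_mulVec_nonneg e0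
  simpa [dotProduct, mulVec, e0, Fin.sum_univ_two] using this

lemma psd_diag1 {A : Matrix (Fin 2) (Fin 2) ℂ} (hA : A.PosSemidef) : 0 ≤ A 1 1 := by
  have := hA.dotProduct_mulVec_nonneg e1
  simpa [dotProduct, mulVec, e1, Fin.sum_univ_two] using this

lemma psd_col1_zero {A : Matrix (Fin 2) (Fin 2) ℂ} (hA : A.PosSemidef) (h : A 1 1 = 0) :
    A 0 1 = 0 ∧ A 1 0 = 0 := by
  have hq : star e1 ⬝ᵥ A *ᵥ e1 = 0 := by
    simpa [dotProduct, mulVec, e1, Fin.sum_univ_two] using h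
  have hk := (hA.dotProduct_mulVec_zero_iff e1).mp hq
  have h01 : A 0 1 = 0 := by
    have := congrFun hk 0
    simpa [mulVec, dotProduct, e1, Fin.sum_univ_two] using this
  refine ⟨h01, ?_⟩
  have := hA.1
  have h10 : A 1 0 = star (A 0 1) := by
    rw [← hA.1.apply]
  rw [h10, h01, star_zero]

lemma psd_col0_zero {A : Matrix (Fin 2) (Fin 2) ℂ} (hA : A.PosSemidef) (h : A 0 0 = 0) :
    A 1 0 = 0 ∧ A 0 1 = 0 := by
  have hq : star e0 ⬝ᵥ A *ᵥ e0 = 0 := by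
    simpa [dotProduct, mulVec, e0, Fin.sum_univ_two] using h
  have hk := (hA.dotProduct_mulVec_zero_iff e0).mp hq
  have h10 : A 1 0 = 0 := by
    have := congrFun hk 1
    simpa [mulVec, dotProduct, e0, Fin.sum_univ_two] using this
  refine ⟨h10, ?_⟩
  have h01 : A 0 1 = star (A 1 0) := by rw [← hA.1.apply]
  rw [h01, h10, star_zero]

/-- A state with vanishing (1,1) entry is `|0⟩⟨0|`. -/
lemma state_eq_proj_e0 {A : Matrix (Fin 2) (Fin 2) ℂ} (hA : A.PosSemidef)
    (ht : A.trace = 1) (h : A 1 1 = 0) : A = proj e0 := by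
  obtain ⟨h01, h10⟩ := psd_col1_zero hA h
  have h00 : A 0 0 = 1 := by
    have := ht
    rw [Matrix.trace_fin_two] at this
    rw [h] at this; simpa using this
  ext i j
  fin_cases i <;> fin_cases j <;> simp [proj_e0_apply, h00, h01, h10, h]

/-- A state annihilated (as quadratic form) by `(1,-1)` is `|+⟩⟨+|`. -/
lemma state_eq_proj_plusv {A : Matrix (Fin 2) (Fin 2) ℂ} (hA : A.PosSemidef)
    (ht : A.trace = 1) (h : A 0 0 - A 0 1 - A 1 0 + A 1 1 = 0) : A = proj plusv := by
  set m : Fin 2 → ℂ := ![1, -1] with hm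
  have hq : star m ⬝ᵥ A *ᵥ m = 0 := by
    simp [hm, dotProduct, mulVec, Fin.sum_univ_two]
    linear_combination h
  have hk := (hA.dotProduct_mulVec_zero_iff m).mp hq
  have hk0 := congrFun hk 0
  have hk1 := congrFun hk 1
  simp [hm, mulVec, dotProduct, Fin.sum_univ_two] at hk0 hk1
  have h01 : A 0 1 = A 0 0 := by linear_combination -hk0
  have h11 : A 1 1 = A 1 0 := by linear_combination -hk1
  have hherm : A 1 0 = star (A 0 1) := by rw [← hA.1.apply]
  have hd : star (A 0 0) = A 0 0 := by
    have := hA.1.apply 0 0; simpa using this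
  have h11' : A 1 1 = A 0 0 := by rw [h11, hherm, h01, hd]
  have h00 : A 0 0 = (2:ℂ)⁻¹ := by
    have := ht
    rw [Matrix.trace_fin_two, h11'] at this
    linear_combination this / 2
  ext i j
  fin_cases i <;> fin_cases j <;>
    simp [proj_plusv_apply, h00, h01, h11', hherm, hd]

/-- Any measure-and-prepare decomposition `Λ₁(ρ) = ∑ α, Tr(M_α ρ) σ_α` of `Λ₁` must use
the projective measurement `{|0⟩⟨0|, |1⟩⟨1|}`: every nonzero `M_α` is (positively)
proportional to `|0⟩⟨0|` or to `|1⟩⟨1|`, with prepared state `σ_α = |0⟩⟨0|` or `|+⟩⟨+|`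
respectively. -/
theorem lambda1_measurement_is_computational_basis
    {k : ℕ} (M : Fin k → Matrix (Fin 2) (Fin 2) ℂ)
    (hM : ∀ α, (M α).PosSemidef) (hM1 : ∑ α, M α = 1)
    (σ : Fin k → Matrix (Fin 2) (Fin 2) ℂ)
    (hσ : ∀ α, (σ α).PosSemidef ∧ (σ α).trace = 1)
    (hdec : ∀ ρ : Matrix (Fin 2) (Fin 2) ℂ, Lambda1 ρ = ∑ α, ((M α * ρ).trace) • σ α) :
    ∀ α, M α ≠ 0 →
      ((∃ c : ℝ, 0 < c ∧ M α = (c : ℂ) • proj e0) ∧ σ α = proj e0) ∨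
      ((∃ c : ℝ, 0 < c ∧ M α = (c : ℂ) • proj e1) ∧ σ α = proj plusv) := by
  have htr0 : ∀ A : Matrix (Fin 2) (Fin 2) ℂ, (A * proj e0).trace = A 0 0 := fun A => by
    simp [Matrix.trace_fin_two, Matrix.mul_apply, proj_e0_apply, Fin.sum_univ_two]
  have htr1 : ∀ A : Matrix (Fin 2) (Fin 2) ℂ, (A * proj e1).trace = A 1 1 := fun A => by
    simp [Matrix.trace_fin_two, Matrix.mul_apply, proj_e1_apply, Fin.sum_univ_two]
  have eq0 : proj e0 = ∑ β, (M β 0 0) • σ β := by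
    calc proj e0 = Lambda1 (proj e0) := by simp [Lambda1, proj_e0_apply]
      _ = ∑ β, ((M β * proj e0).trace) • σ β := hdec _
      _ = ∑ β, (M β 0 0) • σ β := by simp [htr0]
  have eq1 : proj plusv = ∑ β, (M β 1 1) • σ β := by
    calc proj plusv = Lambda1 (proj e1) := by simp [Lambda1, proj_e1_apply]
      _ = ∑ β, ((M β * proj e1).trace) • σ β := hdec _
      _ = ∑ β, (M β 1 1) • σ β := by simp [htr1]
  have eq0' : ∀ i j, proj e0 i j = ∑ β, M β 0 0 * σ β i j := by
    intro i j
    have h := congrFun (congrFun eq0 i) j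
    simpa [Matrix.sum_apply] using h
  have eq1' : ∀ i j, proj plusv i j = ∑ β, M β 1 1 * σ β i j := by
    intro i j
    have h := congrFun (congrFun eq1 i) j
    simpa [Matrix.sum_apply] using h
  have key0 : ∀ β, M β 0 0 * σ β 1 1 = 0 := by
    have h := eq0' 1 1
    rw [proj_e0_apply] at h
    simp only [show ((1:Fin 2) = 0 ∧ (1:Fin 2) = 0) = False by simp, if_false] at h
    have hnn : ∀ β ∈ Finset.univ, (0:ℂ) ≤ M β 0 0 * σ β 1 1 := fun β _ =>
      mul_nonneg (psd_diag0 (hM β)) (psd_diag1 (hσ β).1)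
    intro β
    exact (Finset.sum_eq_zero_iff_of_nonneg hnn).mp h.symm β (Finset.mem_univ β)
  have qform : ∀ β, star (![1,-1] : Fin 2 → ℂ) ⬝ᵥ (σ β) *ᵥ ![1,-1]
      = σ β 0 0 - σ β 0 1 - σ β 1 0 + σ β 1 1 := by
    intro β
    simp [dotProduct, mulVec, Fin.sum_univ_two]
    ring
  have key1 : ∀ β, M β 1 1 * (σ β 0 0 - σ β 0 1 - σ β 1 0 + σ β 1 1) = 0 := by
    have hsum : (0:ℂ) = ∑ β, M β 1 1 * (σ β 0 0 - σ β 0 1 - σ β 1 0 + σ β 1 1) := by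
      have hsplit : ∑ β, M β 1 1 * (σ β 0 0 - σ β 0 1 - σ β 1 0 + σ β 1 1)
          = (∑ β, M β 1 1 * σ β 0 0) - (∑ β, M β 1 1 * σ β 0 1)
            - (∑ β, M β 1 1 * σ β 1 0) + (∑ β, M β 1 1 * σ β 1 1) := by
        simp [mul_sub, mul_add, Finset.sum_sub_distrib, Finset.sum_add_distrib]
      rw [hsplit, ← eq1' 0 0, ← eq1' 0 1, ← eq1' 1 0, ← eq1' 1 1]
      simp [proj_plusv_apply]
    have hnn : ∀ β ∈ Finset.univ,
        (0:ℂ) ≤ M β 1 1 * (σ β 0 0 - σ β 0 1 - σ β 1 0 + σ β 1 1) := by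
      intro β _
      refine mul_nonneg (psd_diag1 (hM β)) ?_
      have := (hσ β).1.dotProduct_mulVec_nonneg ![1,-1]
      rwa [qform β] at this
    intro β
    exact (Finset.sum_eq_zero_iff_of_nonneg hnn).mp hsum.symm β (Finset.mem_univ β)
  intro α hα
  by_cases h11 : M α 1 1 = 0
  · -- case A : M α ∝ |0⟩⟨0|
    obtain ⟨h01, h10⟩ := psd_col1_zero (hM α) h11
    have h00ne : M α 0 0 ≠ 0 := by
      intro h00
      apply hα
      obtain ⟨h10', h01'⟩ := psd_col0_zero (hM α) h00
      ext i j
      fin_cases i <;> fin_cases j <;> simp [h00, h01, h10, h11]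
    have hnn := psd_diag0 (hM α)
    rw [Complex.nonneg_iff] at hnn
    set c := (M α 0 0).re with hcdef
    have hc : M α 0 0 = (c : ℂ) := by
      apply Complex.ext <;> simp [hcdef, ← hnn.2]
    have hcpos : 0 < c := by
      rcases lt_or_eq_of_le hnn.1 with h | h
      · exact h
      · exact absurd (by rw [hc, ← h]; simp) h00ne
    left
    refine ⟨⟨c, hcpos, ?_⟩, ?_⟩
    · ext i j
      fin_cases i <;> fin_cases j <;> simp [proj_e0_apply, hc, h01, h10, h11]
    · have hσ11 : σ α 1 1 = 0 := by
        rcases mul_eq_zero.mp (key0 α) with h | h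
        · exact absurd h h00ne
        · exact h
      exact state_eq_proj_e0 (hσ α).1 (hσ α).2 hσ11
  · -- case B : M α ∝ |1⟩⟨1|
    have hq0 : σ α 0 0 - σ α 0 1 - σ α 1 0 + σ α 1 1 = 0 := by
      rcases mul_eq_zero.mp (key1 α) with h | h
      · exact absurd h h11
      · exact h
    have hσp : σ α = proj plusv := state_eq_proj_plusv (hσ α).1 (hσ α).2 hq0
    have h00 : M α 0 0 = 0 := by
      by_contra h00
      have hσ11 : σ α 1 1 = 0 := by
        rcases mul_eq_zero.mp (key0 α) with h | h
        · exact absurd h h00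
        · exact h
      rw [hσp, proj_plusv_apply] at hσ11
      norm_num at hσ11
    obtain ⟨h10, h01⟩ := psd_col0_zero (hM α) h00
    have hnn := psd_diag1 (hM α)
    rw [Complex.nonneg_iff] at hnn
    set c := (M α 1 1).re with hcdef
    have hc : M α 1 1 = (c : ℂ) := by
      apply Complex.ext <;> simp [hcdef, ← hnn.2]
    have hcpos : 0 < c := by
      rcases lt_or_eq_of_le hnn.1 with h | h
      · exact h
      · exact absurd (by rw [hc, ← h]; simp) h11
    right
    refine ⟨⟨c, hcpos, ?_⟩, hσp⟩
    ext i j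
    fin_cases i <;> fin_cases j <;> simp [proj_e1_apply, hc, h01, h10, h00]
end

section
/- Let Λ₂ be the qubit channel Λ₂(ρ) = ⟨+|ρ|+⟩ ρ₊ + ⟨−|ρ|−⟩ ρ₋ with ρ₊ = p|0⟩⟨0| + (1−p)|1⟩⟨1|, ρ₋ = (1−p)|0⟩⟨0| + p|1⟩⟨1|, and p ≠ 1/2. Then Λ₂ cannot be written in the form Λ₂(ρ) = ⟨0|ρ|0⟩ σ₀ + ⟨1|ρ|1⟩ σ₁ for any density matrices σ₀, σ₁. -/
open Classical Matrix
open scoped ComplexOrder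

noncomputable section

/-- `|−⟩ = (|0⟩ − |1⟩)/√2`. -/
def minusv : Fin 2 → ℂ := fun i => if i = 0 then ((Real.sqrt 2 : ℂ))⁻¹ else -((Real.sqrt 2 : ℂ))⁻¹

/-- `ρ₊ = p|0⟩⟨0| + (1−p)|1⟩⟨1|`. -/
def rhoPlus (p : ℝ) : Matrix (Fin 2) (Fin 2) ℂ := (p : ℂ) • proj e0 + ((1 - p : ℝ) : ℂ) • proj e1
/-- `ρ₋ = (1−p)|0⟩⟨0| + p|1⟩⟨1|`. -/
def rhoMinus (p : ℝ) : Matrix (Fin 2) (Fin 2) ℂ := ((1 - p : ℝ) : ℂ) • proj e0 + (p : ℂ) • proj e1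

/-- The channel `Λ₂(ρ) = ⟨+|ρ|+⟩ ρ₊ + ⟨−|ρ|−⟩ ρ₋`. -/
def Lambda2 (p : ℝ) (ρ : Matrix (Fin 2) (Fin 2) ℂ) : Matrix (Fin 2) (Fin 2) ℂ :=
  (star plusv ⬝ᵥ ρ.mulVec plusv) • rhoPlus p + (star minusv ⬝ᵥ ρ.mulVec minusv) • rhoMinus p

end

lemma s2 : ((Real.sqrt 2 : ℂ))⁻¹ * ((Real.sqrt 2 : ℂ))⁻¹ = 1/2 := by
  rw [← mul_inv]
  norm_cast
  rw [Real.mul_self_sqrt (by norm_num)]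
  norm_num

lemma s4 : ((Real.sqrt 2 : ℂ))⁻¹ ^ 4 = 1/4 := by
  have : ((Real.sqrt 2 : ℂ))⁻¹ ^ 4
      = (((Real.sqrt 2 : ℂ))⁻¹ * ((Real.sqrt 2 : ℂ))⁻¹) * (((Real.sqrt 2 : ℂ))⁻¹ * ((Real.sqrt 2 : ℂ))⁻¹) := by
    ring
  rw [this, s2]; norm_num

lemma proj_psd (u : Fin 2 → ℂ) : (proj u).PosSemidef := by
  rw [Matrix.posSemidef_iff_dotProduct_mulVec]
  constructor
  · ext i j
    simp [proj, Matrix.vecMulVec_apply, Matrix.conjTranspose_apply, mul_comm]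
  · intro x
    have : star x ⬝ᵥ (proj u).mulVec x = star (star u ⬝ᵥ x) * (star u ⬝ᵥ x) := by
      simp [proj, Matrix.vecMulVec_apply, Matrix.mulVec, dotProduct, Fin.sum_univ_two]
      ring
    rw [this]
    exact star_mul_self_nonneg _

/-- For `p ≠ 1/2`, the channel `Λ₂` cannot be written as a measure-and-prepare channel
with measurement in the computational basis: there are no density matrices `σ₀, σ₁` with
`Λ₂(ρ) = ⟨0|ρ|0⟩ σ₀ + ⟨1|ρ|1⟩ σ₁` on all density matrices `ρ`. -/
theorem lambda2_not_computational_basis (p : ℝ) (hp : p ≠ 1 / 2) :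
    ¬ ∃ σ₀ σ₁ : Matrix (Fin 2) (Fin 2) ℂ,
        (σ₀.PosSemidef ∧ σ₀.trace = 1) ∧ (σ₁.PosSemidef ∧ σ₁.trace = 1) ∧
        ∀ ρ : Matrix (Fin 2) (Fin 2) ℂ, ρ.PosSemidef → ρ.trace = 1 →
          Lambda2 p ρ = ρ 0 0 • σ₀ + ρ 1 1 • σ₁ := by
  rintro ⟨σ₀, σ₁, _, _, h⟩
  have tp : (proj plusv).trace = 1 := by
    simp [proj, Matrix.trace, Matrix.diag, Matrix.vecMulVec_apply, Fin.sum_univ_two, plusv]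
    rw [s2]; norm_num
  have tm : (proj minusv).trace = 1 := by
    simp [proj, Matrix.trace, Matrix.diag, Matrix.vecMulVec_apply, Fin.sum_univ_two, minusv]
    rw [s2]; norm_num
  have h1 := h (proj plusv) (proj_psd _) tp
  have h2 := h (proj minusv) (proj_psd _) tm
  have d00p : (proj plusv) 0 0 = 1/2 := by
    simp [proj, Matrix.vecMulVec_apply, plusv]; rw [s2]; norm_num
  have d11p : (proj plusv) 1 1 = 1/2 := by
    simp [proj, Matrix.vecMulVec_apply, plusv]; rw [s2]; norm_num
  have d00m : (proj minusv) 0 0 = 1/2 := by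
    simp [proj, Matrix.vecMulVec_apply, minusv]; rw [s2]; norm_num
  have d11m : (proj minusv) 1 1 = 1/2 := by
    simp [proj, Matrix.vecMulVec_apply, minusv]; rw [s2]; norm_num
  have key : Lambda2 p (proj plusv) = Lambda2 p (proj minusv) := by
    rw [h1, h2, d00p, d11p, d00m, d11m]
  have e00 : Lambda2 p (proj plusv) 0 0 = Lambda2 p (proj minusv) 0 0 := by rw [key]
  have lp : Lambda2 p (proj plusv) 0 0 = (p : ℂ) := by
    simp only [Lambda2, proj, rhoPlus, rhoMinus, Matrix.vecMulVec_apply, Matrix.mulVec,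
      dotProduct, Fin.sum_univ_two, plusv, minusv, e0, e1, Matrix.add_apply,
      Matrix.smul_apply, Pi.star_apply, RCLike.star_def, map_inv₀, Complex.conj_ofReal, map_neg,
      _root_.map_one, _root_.map_zero, if_true, if_false]
    simp
    ring_nf
    rw [s4]
    ring
  have lm : Lambda2 p (proj minusv) 0 0 = ((1 - p : ℝ) : ℂ) := by
    simp only [Lambda2, proj, rhoPlus, rhoMinus, Matrix.vecMulVec_apply, Matrix.mulVec,
      dotProduct, Fin.sum_univ_two, plusv, minusv, e0, e1, Matrix.add_apply,
      Matrix.smul_apply, Pi.star_apply, RCLike.star_def, map_inv₀, Complex.conj_ofReal, map_neg,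
      _root_.map_one, _root_.map_zero, if_true, if_false]
    simp
    ring_nf
    rw [s4]
    ring
  rw [lp, lm] at e00
  have : p = 1 - p := by exact_mod_cast e00
  apply hp
  linarith
end
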